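/- Let $Q_1, Q_2$ be two quadratic forms in a polynomial ring over a field such that $Q_1$ and $Q_2$ are not scalar multiples of each other, and suppose there exist linear forms $L_1, L_2$ with $L_1 Q_1 = L_2 Q_2$ and $L_1 \neq 0$. Then there exists a linear form $L_3$ such that $Q_1 = L_2 L_3$ and $Q_2 = L_1 L_3$. -/

import Mathlib

open MvPolynomial

namespace QuadSyzAux

variable {σ : Type*} {R : Type*}

lemma degree_add (a b : σ →₀ ℕ) : (a + b).degree = a.degree + b.degree := by
  simp only [Finsupp.degree_eq_weight_one, map_add]

lemma isHom_of [CommSemiring R] (p : MvPolynomial σ R) (m : ℕ)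
    (h : ∀ d : σ →₀ ℕ, coeff d p ≠ 0 → d.degree = m) : p.IsHomogeneous m := by
  intro d hd
  rw [show (Finsupp.weight (1 : σ → ℕ)) = Finsupp.weight (fun _ => 1) from rfl,
    ← Finsupp.degree_eq_weight_one]
  exact h d hd

lemma degree_eq_of_isHom [CommSemiring R] {p : MvPolynomial σ R} {m : ℕ}
    (hp : p.IsHomogeneous m) {d : σ →₀ ℕ} (hd : coeff d p ≠ 0) : d.degree = m := by
  rw [Finsupp.degree_eq_weight_one]
  exact hp hd

lemma hc_mul_of [CommSemiring R] {p q : MvPolynomial σ R} {m n : ℕ}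
    (H : ∀ u v : σ →₀ ℕ, coeff u p ≠ 0 → coeff v q ≠ 0 →
      u.degree + v.degree = m + n → u.degree = m) :
    homogeneousComponent (m + n) (p * q)
      = homogeneousComponent m p * homogeneousComponent n q := by
  classical
  ext e
  rw [coeff_homogeneousComponent, coeff_mul, coeff_mul]
  split_ifs with h
  · refine Finset.sum_congr rfl ?_
    rintro ⟨u, v⟩ huv
    rw [Finset.HasAntidiagonal.mem_antidiagonal] at huv
    simp only [coeff_homogeneousComponent]
    by_cases hu : coeff u p = 0
    · simp [hu]
    by_cases hv : coeff v q = 0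
    · simp [hv]
    have hsum : u.degree + v.degree = m + n := by
      rw [← degree_add, huv, h]
    have hm : u.degree = m := H u v hu hv hsum
    have hn : v.degree = n := by omega
    simp [hm, hn]
  · symm
    refine Finset.sum_eq_zero ?_
    rintro ⟨u, v⟩ huv
    rw [Finset.HasAntidiagonal.mem_antidiagonal] at huv
    simp only [coeff_homogeneousComponent]
    by_cases hm : u.degree = m
    · by_cases hn : v.degree = n
      · exfalso
        apply h
        rw [← huv, degree_add, hm, hn]
      · simp [hn]
    · simp [hm]

lemma totalDegree_eq_sup [CommSemiring R] (p : MvPolynomial σ R) :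
    p.totalDegree = p.support.sup Finsupp.degree := rfl

/-- strong lemma: factors of a nonzero homogeneous polynomial over a domain
are homogeneous with degrees adding to the total. -/
lemma strong [CommRing R] [IsDomain R] {p q : MvPolynomial σ R} {kk : ℕ}
    (h : (p * q).IsHomogeneous kk) (hp : p ≠ 0) (hq : q ≠ 0) :
    p.IsHomogeneous p.totalDegree ∧ q.IsHomogeneous q.totalDegree ∧
      p.totalDegree + q.totalDegree = kk := by
  classical
  have hps : p.support.Nonempty := support_nonempty.mpr hp
  have hqs : q.support.Nonempty := support_nonempty.mpr hq
  set a := p.support.inf' hps Finsupp.degree with ha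
  set b := q.support.inf' hqs Finsupp.degree with hb
  have hAeq : p.totalDegree = p.support.sup Finsupp.degree := totalDegree_eq_sup p
  have hBeq : q.totalDegree = q.support.sup Finsupp.degree := totalDegree_eq_sup q
  rw [hAeq, hBeq]
  set A := p.support.sup Finsupp.degree with hA
  set B := q.support.sup Finsupp.degree with hB
  have hale : ∀ d : σ →₀ ℕ, coeff d p ≠ 0 → a ≤ d.degree ∧ d.degree ≤ A := by
    intro d hd
    have hmem : d ∈ p.support := mem_support_iff.mpr hd
    exact ⟨Finset.inf'_le _ hmem, Finset.le_sup (f := Finsupp.degree) hmem⟩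
  have hble : ∀ d : σ →₀ ℕ, coeff d q ≠ 0 → b ≤ d.degree ∧ d.degree ≤ B := by
    intro d hd
    have hmem : d ∈ q.support := mem_support_iff.mpr hd
    exact ⟨Finset.inf'_le _ hmem, Finset.le_sup (f := Finsupp.degree) hmem⟩
  -- nonvanishing of extreme components
  have hhca : homogeneousComponent a p ≠ 0 := by
    obtain ⟨d, hd, hdeg⟩ := Finset.exists_mem_eq_inf' hps Finsupp.degree
    intro h0
    have : coeff d (homogeneousComponent a p) = 0 := by rw [h0]; simp
    rw [coeff_homogeneousComponent, if_pos hdeg.symm] at this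
    exact (mem_support_iff.mp hd) this
  have hhcA : homogeneousComponent A p ≠ 0 := by
    obtain ⟨d, hd, hdeg⟩ := Finset.exists_mem_eq_sup p.support hps Finsupp.degree
    intro h0
    have : coeff d (homogeneousComponent A p) = 0 := by rw [h0]; simp
    rw [coeff_homogeneousComponent, if_pos hdeg.symm] at this
    exact (mem_support_iff.mp hd) this
  have hhcb : homogeneousComponent b q ≠ 0 := by
    obtain ⟨d, hd, hdeg⟩ := Finset.exists_mem_eq_inf' hqs Finsupp.degree
    intro h0
    have : coeff d (homogeneousComponent b q) = 0 := by rw [h0]; simp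
    rw [coeff_homogeneousComponent, if_pos hdeg.symm] at this
    exact (mem_support_iff.mp hd) this
  have hhcB : homogeneousComponent B q ≠ 0 := by
    obtain ⟨d, hd, hdeg⟩ := Finset.exists_mem_eq_sup q.support hqs Finsupp.degree
    intro h0
    have : coeff d (homogeneousComponent B q) = 0 := by rw [h0]; simp
    rw [coeff_homogeneousComponent, if_pos hdeg.symm] at this
    exact (mem_support_iff.mp hd) this
  -- the two component-product identities
  have hmin : homogeneousComponent (a + b) (p * q)
      = homogeneousComponent a p * homogeneousComponent b q := by
    apply hc_mul_of
    intro u v hu hv hsum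
    have h1 := hale u hu
    have h2 := hble v hv
    omega
  have hmax : homogeneousComponent (A + B) (p * q)
      = homogeneousComponent A p * homogeneousComponent B q := by
    apply hc_mul_of
    intro u v hu hv hsum
    have h1 := hale u hu
    have h2 := hble v hv
    omega
  -- the product is homogeneous of degree kk, so components vanish off kk
  have hcomp : ∀ m : ℕ, m ≠ kk → homogeneousComponent m (p * q) = 0 := by
    intro m hm
    ext e
    rw [coeff_homogeneousComponent]
    split_ifs with he
    · by_contra hne
      exact hm (he ▸ degree_eq_of_isHom h hne)
    · simp
  have habk : a + b = kk := by
    by_contra hne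
    rw [hcomp _ hne] at hmin
    exact mul_ne_zero hhca hhcb hmin.symm
  have hABk : A + B = kk := by
    by_contra hne
    rw [hcomp _ hne] at hmax
    exact mul_ne_zero hhcA hhcB hmax.symm
  have haA : a ≤ A := by
    obtain ⟨d, hd, hdeg⟩ := Finset.exists_mem_eq_inf' hps Finsupp.degree
    have := Finset.le_sup (f := Finsupp.degree) hd
    omega
  have hbB : b ≤ B := by
    obtain ⟨d, hd, hdeg⟩ := Finset.exists_mem_eq_inf' hqs Finsupp.degree
    have := Finset.le_sup (f := Finsupp.degree) hd
    omega
  have haA' : a = A := by omega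
  have hbB' : b = B := by omega
  refine ⟨isHom_of _ _ ?_, isHom_of _ _ ?_, hABk⟩
  · intro d hd
    have h1 := hale d hd
    omega
  · intro d hd
    have h1 := hble d hd
    omega

lemma eq_C_of_isHom_zero [CommSemiring R] {p : MvPolynomial σ R}
    (hp : p.IsHomogeneous 0) : p = C (coeff 0 p) := by
  classical
  ext d
  by_cases hd : d = 0
  · subst hd; simp
  · rw [coeff_C, if_neg (Ne.symm hd)]
    apply hp.coeff_eq_zero
    intro hdeg
    exact hd ((Finsupp.degree_eq_zero_iff d).mp hdeg)

lemma prime_of_linear {kk : Type*} [Field kk] {L : MvPolynomial σ kk}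
    (hL : L.IsHomogeneous 1) (hLne : L ≠ 0) : Prime L := by
  rw [← UniqueFactorizationMonoid.irreducible_iff_prime]
  constructor
  · intro hu
    obtain ⟨v, hv⟩ := hu.exists_right_inv
    have hvne : v ≠ 0 := by
      intro h0; rw [h0, mul_zero] at hv; exact one_ne_zero hv.symm
    have h1 : (L * v).IsHomogeneous 0 := by rw [hv]; exact isHomogeneous_one σ kk
    obtain ⟨hLh, hvh, hdeg⟩ := strong h1 hLne hvne
    have : L.totalDegree = 1 := hL.totalDegree hLne
    omega
  · intro x y hxy
    have hxne : x ≠ 0 := by rintro rfl; rw [zero_mul] at hxy; exact hLne hxy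
    have hyne : y ≠ 0 := by rintro rfl; rw [mul_zero] at hxy; exact hLne hxy
    have h1 : (x * y).IsHomogeneous 1 := by rw [← hxy]; exact hL
    obtain ⟨hxh, hyh, hdeg⟩ := strong h1 hxne hyne
    rcases Nat.eq_zero_or_pos x.totalDegree with h0 | hpos
    · left
      rw [h0] at hxh
      have hx : x = C (coeff 0 x) := eq_C_of_isHom_zero hxh
      have hc0 : coeff 0 x ≠ 0 := by
        intro hc; rw [hc, map_zero] at hx; exact hxne hx
      rw [hx]
      exact (isUnit_iff_ne_zero.mpr hc0).map C
    · right
      have hy0 : y.totalDegree = 0 := by omega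
      rw [hy0] at hyh
      have hy : y = C (coeff 0 y) := eq_C_of_isHom_zero hyh
      have hc0 : coeff 0 y ≠ 0 := by
        intro hc; rw [hc, map_zero] at hy; exact hyne hy
      rw [hy]
      exact (isUnit_iff_ne_zero.mpr hc0).map C

end QuadSyzAux

open QuadSyzAux

/-- If two quadratic forms `Q₁, Q₂` in a polynomial ring over a field are not scalar
multiples of each other and satisfy a linear syzygy `L₁ Q₁ = L₂ Q₂` with `L₁ ≠ 0`,
then there is a linear form `L₃` with `Q₁ = L₂ L₃` and `Q₂ = L₁ L₃`. -/
theorem quadrics_with_linear_syzygy_factor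
    {k : Type*} [Field k] {n : ℕ}
    (Q1 Q2 L1 L2 : MvPolynomial (Fin n) k)
    (hQ1 : Q1.IsHomogeneous 2) (hQ2 : Q2.IsHomogeneous 2)
    (hL1 : L1.IsHomogeneous 1) (hL2 : L2.IsHomogeneous 1)
    (hns1 : ∀ c : k, Q1 ≠ c • Q2) (hns2 : ∀ c : k, Q2 ≠ c • Q1)
    (hL1ne : L1 ≠ 0)
    (hsyz : L1 * Q1 = L2 * Q2) :
    ∃ L3 : MvPolynomial (Fin n) k, L3.IsHomogeneous 1 ∧ Q1 = L2 * L3 ∧ Q2 = L1 * L3 := by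
  have hQ1ne : Q1 ≠ 0 := by
    intro h0
    exact hns1 0 (by rw [h0, zero_smul])
  have hQ2ne : Q2 ≠ 0 := by
    intro h0
    exact hns2 0 (by rw [h0, zero_smul])
  have hL2ne : L2 ≠ 0 := by
    intro h0
    rw [h0, zero_mul] at hsyz
    exact mul_ne_zero hL1ne hQ1ne hsyz
  have hprime : Prime L1 := prime_of_linear hL1 hL1ne
  have hdvd : L1 ∣ L2 * Q2 := ⟨Q1, hsyz.symm⟩
  rcases hprime.2.2 _ _ hdvd with hdL2 | hdQ2
  · -- L1 ∣ L2 : contradiction with non-proportionality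
    exfalso
    obtain ⟨w, hw⟩ := hdL2
    have hwne : w ≠ 0 := by
      rintro rfl; rw [mul_zero] at hw; exact hL2ne hw
    have h1 : (L1 * w).IsHomogeneous 1 := hw ▸ hL2
    obtain ⟨hLh, hwh, hdeg⟩ := strong h1 hL1ne hwne
    have hLd : L1.totalDegree = 1 := hL1.totalDegree hL1ne
    have hw0 : w.totalDegree = 0 := by omega
    rw [hw0] at hwh
    have hwc : w = C (coeff 0 w) := eq_C_of_isHom_zero hwh
    apply hns1 (coeff 0 w)
    have hw' : L2 = L1 * C (coeff 0 w) := by rw [hw, ← hwc]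
    have : L1 * Q1 = L1 * (C (coeff 0 w) * Q2) := by
      rw [hsyz, hw']; ring
    have := mul_left_cancel₀ hL1ne this
    rw [this, smul_eq_C_mul]
  · -- L1 ∣ Q2 : the desired factorization
    obtain ⟨L3, hL3⟩ := hdQ2
    have hL3ne : L3 ≠ 0 := by
      rintro rfl; rw [mul_zero] at hL3; exact hQ2ne hL3
    have h2 : (L1 * L3).IsHomogeneous 2 := hL3 ▸ hQ2
    obtain ⟨hLh, hL3h, hdeg⟩ := strong h2 hL1ne hL3ne
    have hLd : L1.totalDegree = 1 := hL1.totalDegree hL1ne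
    have hL3d : L3.totalDegree = 1 := by omega
    rw [hL3d] at hL3h
    refine ⟨L3, hL3h, ?_, hL3⟩
    have : L1 * Q1 = L1 * (L2 * L3) := by rw [hsyz, hL3]; ring
    exact mul_left_cancel₀ hL1ne this
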